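/- Under the hypotheses of the A_k-chain configuration (vertices 1,…,k of a weighted graph on {1,…,n} over a field K form a chain: a_{i,i+1} = 1 for 1 ≤ i ≤ k−1, a_{ij} = 0 for other pairs i < j ≤ k, and a_{ij} = 0 for i ≤ k−1 < j), with C_i(t) the Coxeter polynomial of the induced subgraph on {i+1,…,n} evaluated at nonzero t ∈ K (C₀ the whole graph), the following Christoffel–Darboux identity holds for all nonzero x, y ∈ K and 1 ≤ i ≤ k−1: C_{i−1}(x)·C_i(y) − C_{i−1}(y)·C_i(x) = (x + x⁻¹ − y − y⁻¹)·Σ_{j=i}^{k−1} C_j(x)·C_j(y) + C_{k−1}(x)·C_k(y) − C_{k−1}(y)·C_k(x). -/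

import Mathlib

open Matrix Finset

/-- The Seifert matrix of a weighted graph on `Fin n` with symmetric weights `a`. -/
def chainSeifert {K : Type*} [Field K] {n : ℕ} (a : Fin n → Fin n → K) :
    Matrix (Fin n) (Fin n) K :=
  Matrix.of fun i j => if i = j then (1 : K) else if i < j then -a i j else 0

/-- `coxMatrix a t = t • S + t⁻¹ • Sᵀ`, whose determinant is the Coxeter polynomial. -/
def coxMatrix {K : Type*} [Field K] {n : ℕ} (a : Fin n → Fin n → K) (t : K) :
    Matrix (Fin n) (Fin n) K :=
  t • chainSeifert a + t⁻¹ • (chainSeifert a)ᵀ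

/-- `chainC a t i` is the Coxeter polynomial of the induced subgraph on the vertices
`{i, i+1, …, n-1}` of `Fin n` (i.e. vertices `{i+1, …, n}` in 1-based numbering);
for `i = 0` it is the Coxeter polynomial of the whole graph. -/
def chainC {K : Type*} [Field K] {n : ℕ} (a : Fin n → Fin n → K) (t : K) (i : ℕ) : K :=
  ((coxMatrix a t).submatrix
    (fun x : Fin (n - i) => (⟨i + x.val, by have := x.isLt; omega⟩ : Fin n))
    (fun x : Fin (n - i) => (⟨i + x.val, by have := x.isLt; omega⟩ : Fin n))).det


lemma coxMatrix_diag {K : Type*} [Field K] {n : ℕ} (a : Fin n → Fin n → K) (t : K)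
    (p : Fin n) : coxMatrix a t p p = t + t⁻¹ := by
  simp [coxMatrix, chainSeifert, Matrix.add_apply, Matrix.smul_apply, Matrix.transpose_apply]

lemma coxMatrix_lt {K : Type*} [Field K] {n : ℕ} (a : Fin n → Fin n → K) (t : K)
    {p q : Fin n} (h : p.val < q.val) : coxMatrix a t p q = -(t * a p q) := by
  have h1 : p ≠ q := by intro e; subst e; omega
  have h2 : p < q := Fin.lt_def.mpr h
  have h3 : ¬ q < p := by simp only [Fin.lt_def, not_lt]; omega
  have h4 : q ≠ p := fun e => h1 e.symm
  simp [coxMatrix, chainSeifert, Matrix.add_apply, Matrix.smul_apply, Matrix.transpose_apply,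
    h1, h2, h3, h4]

lemma coxMatrix_gt {K : Type*} [Field K] {n : ℕ} (a : Fin n → Fin n → K) (t : K)
    {p q : Fin n} (h : q.val < p.val) : coxMatrix a t p q = -(t⁻¹ * a q p) := by
  have h1 : p ≠ q := by intro e; subst e; omega
  have h2 : q < p := Fin.lt_def.mpr h
  have h3 : ¬ p < q := by simp only [Fin.lt_def, not_lt]; omega
  have h4 : q ≠ p := fun e => h1 e.symm
  simp [coxMatrix, chainSeifert, Matrix.add_apply, Matrix.smul_apply, Matrix.transpose_apply,
    h1, h2, h3, h4]

lemma det_expand2 {K : Type*} [CommRing K] {m : ℕ} (M : Matrix (Fin (m+2)) (Fin (m+2)) K)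
    (h0 : ∀ j : Fin (m+2), 2 ≤ j.val → M 0 j = 0)
    (h0' : ∀ j : Fin (m+2), 2 ≤ j.val → M j 0 = 0) :
    M.det = M 0 0 * (M.submatrix Fin.succ Fin.succ).det
      - M 0 1 * (M 1 0 * (M.submatrix (Fin.succ ∘ Fin.succ) (Fin.succ ∘ Fin.succ)).det) := by
  have hone : (Fin.succ 0 : Fin (m+2)) = 1 := rfl
  rw [Matrix.det_succ_row_zero, Fin.sum_univ_succ, Fin.sum_univ_succ]
  have hz : ∀ j : Fin m, M 0 j.succ.succ = 0 := fun j => h0 _ (by simp [Fin.val_succ])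
  simp only [hz, mul_zero, zero_mul, Finset.sum_const_zero, add_zero]
  have h1 : ((0 : Fin (m+2)).succAbove) = Fin.succ := by
    funext j; exact Fin.zero_succAbove j
  have hA : (M.submatrix Fin.succ ((1 : Fin (m+2)).succAbove)).det
      = M 1 0 * (M.submatrix (Fin.succ ∘ Fin.succ) (Fin.succ ∘ Fin.succ)).det := by
    rw [Matrix.det_succ_column_zero, Fin.sum_univ_succ]
    have hz' : ∀ i : Fin m, (M.submatrix Fin.succ ((1 : Fin (m+2)).succAbove)) i.succ 0 = 0 := by
      intro i
      simp only [Matrix.submatrix_apply]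
      have h00 : (1 : Fin (m+2)).succAbove 0 = 0 := rfl
      rw [h00]
      exact h0' _ (by simp [Fin.val_succ])
    simp only [hz', zero_mul, mul_zero, Finset.sum_const_zero, add_zero]
    have e1 : (M.submatrix Fin.succ ((1 : Fin (m+2)).succAbove)) 0 0 = M 1 0 := by
      simp only [Matrix.submatrix_apply]
      congr 1
    have e2 : ((M.submatrix Fin.succ ((1 : Fin (m+2)).succAbove)).submatrix
        ((0:Fin (m+1)).succAbove) Fin.succ) = M.submatrix (Fin.succ ∘ Fin.succ) (Fin.succ ∘ Fin.succ) := by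
      ext i j
      simp only [Matrix.submatrix_apply, Function.comp, Fin.zero_succAbove]
      congr 1
    rw [e1, e2]
    simp
  rw [hone, hA, h1]
  simp only [Fin.val_succ, Fin.val_zero, Fin.val_one, pow_zero, pow_one, one_mul]
  ring

lemma chainC_eq {K : Type*} [Field K] {n : ℕ} (a : Fin n → Fin n → K) (t : K) (i : ℕ)
    {m : ℕ} (h : n - i = m) :
    chainC a t i = ((coxMatrix a t).submatrix
      (fun p : Fin m => (⟨i + p.val, by have := p.isLt; omega⟩ : Fin n))
      (fun p : Fin m => (⟨i + p.val, by have := p.isLt; omega⟩ : Fin n))).det := by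
  subst h; rfl

lemma chainC_rec {K : Type*} [Field K] {n k : ℕ}
    (a : Fin n → Fin n → K)
    (hkn : k ≤ n)
    (hchain : ∀ i : ℕ, (h : i + 1 < k) →
      a ⟨i, Nat.lt_of_lt_of_le (Nat.lt_of_succ_lt h) hkn⟩ ⟨i + 1, Nat.lt_of_lt_of_le h hkn⟩ = 1)
    (hzero : ∀ i j : ℕ, (hi : i < k) → (hj : j < k) → i < j → j ≠ i + 1 →
      a ⟨i, Nat.lt_of_lt_of_le hi hkn⟩ ⟨j, Nat.lt_of_lt_of_le hj hkn⟩ = 0)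
    (hcut : ∀ i j : ℕ, (hi : i + 1 < k) → (hj : k ≤ j) → (hjn : j < n) →
      a ⟨i, Nat.lt_of_lt_of_le (Nat.lt_of_succ_lt hi) hkn⟩ ⟨j, hjn⟩ = 0)
    (t : K) (ht : t ≠ 0) (i : ℕ) (h1 : 1 ≤ i) (h2 : i < k) :
    chainC a t (i - 1) = (t + t⁻¹) * chainC a t i - chainC a t (i + 1) := by
  set m := n - (i + 1) with hm
  have hi1n : i + 1 ≤ n := by omega
  have hAe : n - (i - 1) = m + 2 := by omega
  have hBe : n - i = m + 1 := by omega
  set g : Fin (m + 2) → Fin n := fun p => ⟨i - 1 + p.val, by have := p.isLt; omega⟩ with hg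
  set M : Matrix (Fin (m+2)) (Fin (m+2)) K := (coxMatrix a t).submatrix g g with hM
  have hCA : chainC a t (i - 1) = M.det := by
    rw [chainC_eq a t (i-1) hAe]
  have hCB : chainC a t i = (M.submatrix Fin.succ Fin.succ).det := by
    rw [chainC_eq a t i hBe]
    congr 1
    ext p q
    simp only [hM, Matrix.submatrix_apply]
    congr 1 <;> · apply Fin.ext; simp only [hg, Fin.val_succ]; omega
  have hCC : chainC a t (i + 1)
      = (M.submatrix (Fin.succ ∘ Fin.succ) (Fin.succ ∘ Fin.succ)).det := by
    rw [chainC_eq a t (i+1) rfl]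
    congr 1
    ext p q
    simp only [hM, Matrix.submatrix_apply, Function.comp]
    congr 1 <;> · apply Fin.ext; simp only [hg, Fin.val_succ]; omega
  have e0 : g 0 = ⟨i - 1, by omega⟩ := Fin.ext (by simp [hg])
  have e1 : g 1 = ⟨i - 1 + 1, by omega⟩ := Fin.ext (by simp [hg])
  have ha : ∀ j : Fin (m+2), 2 ≤ j.val → a (g 0) (g j) = 0 := by
    intro j hj
    have ej : g j = ⟨i - 1 + j.val, by have := j.isLt; omega⟩ := Fin.ext (by simp [hg])
    rw [e0, ej]
    by_cases hc : i - 1 + j.val < k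
    · exact hzero (i-1) (i-1+j.val) (by omega) hc (by omega) (by omega)
    · exact hcut (i-1) (i-1+j.val) (by omega) (by omega) (by have := j.isLt; omega)
  have h0 : ∀ j : Fin (m+2), 2 ≤ j.val → M 0 j = 0 := by
    intro j hj
    have hlt : (g 0).val < (g j).val := by simp [hg]; rw [Fin.lt_def, Fin.val_zero]; omega
    rw [hM, Matrix.submatrix_apply, coxMatrix_lt a t hlt, ha j hj, mul_zero, neg_zero]
  have h0' : ∀ j : Fin (m+2), 2 ≤ j.val → M j 0 = 0 := by
    intro j hj
    have hlt : (g 0).val < (g j).val := by simp [hg]; rw [Fin.lt_def, Fin.val_zero]; omega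
    rw [hM, Matrix.submatrix_apply, coxMatrix_gt a t hlt, ha j hj, mul_zero, neg_zero]
  have hlt01 : (g 0).val < (g 1).val := by simp [hg]
  have ha01 : a (g 0) (g 1) = 1 := by
    rw [e0, e1]; exact hchain (i-1) (by omega)
  have e00 : M 0 0 = t + t⁻¹ := coxMatrix_diag a t (g 0)
  have e01 : M 0 1 = -t := by
    rw [hM, Matrix.submatrix_apply, coxMatrix_lt a t hlt01, ha01, mul_one]
  have e10 : M 1 0 = -t⁻¹ := by
    rw [hM, Matrix.submatrix_apply, coxMatrix_gt a t hlt01, ha01, mul_one]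
  rw [hCA, hCB, hCC, det_expand2 M h0 h0', e00, e01, e10]
  have hc : -t * (-t⁻¹ * (M.submatrix (Fin.succ ∘ Fin.succ) (Fin.succ ∘ Fin.succ)).det)
      = (M.submatrix (Fin.succ ∘ Fin.succ) (Fin.succ ∘ Fin.succ)).det := by
    field_simp
  rw [hc]

/-- The Christoffel–Darboux identity of Example 2 (multiplied through by `x - y`):
under the `A_k`-chain hypotheses, for nonzero `x, y` and `1 ≤ i ≤ k - 1`,
`C_{i-1}(x)·C_i(y) - C_{i-1}(y)·C_i(x)
  = (x + x⁻¹ - y - y⁻¹)·Σ_{j=i}^{k-1} C_j(x)·C_j(y)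
    + C_{k-1}(x)·C_k(y) - C_{k-1}(y)·C_k(x)`. -/
theorem chain_christoffel_darboux {K : Type*} [Field K] (n k : ℕ)
    (a : Fin n → Fin n → K) (hsym : ∀ i j, a i j = a j i)
    (hk : 1 ≤ k) (hkn : k ≤ n)
    (hchain : ∀ i : ℕ, (h : i + 1 < k) →
      a ⟨i, by omega⟩ ⟨i + 1, by omega⟩ = 1)
    (hzero : ∀ i j : ℕ, (hi : i < k) → (hj : j < k) → i < j → j ≠ i + 1 →
      a ⟨i, by omega⟩ ⟨j, by omega⟩ = 0)
    (hcut : ∀ i j : ℕ, (hi : i + 1 < k) → (hj : k ≤ j) → (hjn : j < n) →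
      a ⟨i, by omega⟩ ⟨j, by omega⟩ = 0)
    (x y : K) (hx : x ≠ 0) (hy : y ≠ 0) :
    ∀ i : ℕ, 1 ≤ i → i < k →
      chainC a x (i - 1) * chainC a y i - chainC a y (i - 1) * chainC a x i
        = (x + x⁻¹ - y - y⁻¹) *
            (∑ j ∈ Finset.Icc i (k - 1), chainC a x j * chainC a y j)
          + chainC a x (k - 1) * chainC a y k
          - chainC a y (k - 1) * chainC a x k := by
  have recx := chainC_rec a hkn hchain hzero hcut x hx
  have recy := chainC_rec a hkn hchain hzero hcut y hy
  have base : 1 ≤ k - 1 →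
      chainC a x (k - 1 - 1) * chainC a y (k - 1)
          - chainC a y (k - 1 - 1) * chainC a x (k - 1)
        = (x + x⁻¹ - y - y⁻¹) *
            (∑ j ∈ Finset.Icc (k - 1) (k - 1), chainC a x j * chainC a y j)
          + chainC a x (k - 1) * chainC a y k
          - chainC a y (k - 1) * chainC a x k := by
    intro h1
    rw [Finset.Icc_self, Finset.sum_singleton]
    have hx1 := recx (k - 1) h1 (by omega)
    have hy1 := recy (k - 1) h1 (by omega)
    rw [show k - 1 + 1 = k by omega] at hx1 hy1
    rw [hx1, hy1]; ring
  have key : ∀ d : ℕ, ∀ i : ℕ, k - 1 - i ≤ d → 1 ≤ i → i < k →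
      chainC a x (i - 1) * chainC a y i - chainC a y (i - 1) * chainC a x i
        = (x + x⁻¹ - y - y⁻¹) *
            (∑ j ∈ Finset.Icc i (k - 1), chainC a x j * chainC a y j)
          + chainC a x (k - 1) * chainC a y k
          - chainC a y (k - 1) * chainC a x k := by
    intro d
    induction d with
    | zero =>
      intro i hd h1 h2
      have hik : i = k - 1 := by omega
      subst hik
      exact base h1
    | succ d ih =>
      intro i hd h1 h2
      by_cases hcase : i = k - 1
      · subst hcase; exact base h1
      · have hik : i < k - 1 := by omega
        have hsum : Finset.Icc i (k - 1)
            = Finset.cons i (Finset.Ioc i (k - 1)) (by simp) :=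
          Finset.Icc_eq_cons_Ioc (by omega)
        rw [hsum, Finset.sum_cons, ← Finset.Icc_add_one_left_eq_Ioc]
        have ih' := ih (i + 1) (by omega) (by omega) (by omega)
        simp only [Nat.add_sub_cancel] at ih'
        have hx1 := recx i h1 h2
        have hy1 := recy i h1 h2
        rw [hx1, hy1]
        linear_combination ih'
  intro i h1 h2
  exact key (k - 1 - i) i le_rfl h1 h2
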